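/- Let y ∈ ℝ₊^{2m+1} have strictly positive components and let x ∈ ℝ^{m+1} have strictly positive components. Then the algorithm update x' = T(x) has strictly positive components and lies in the simplex 𝒮 = {x ∈ ℝ₊^{m+1} : Σ_{j=0}^{m} x_j = c}, i.e., Σ_{j=0}^{m} T(x)_j = c = √(Σ_{i=0}^{2m} y_i). -/

import Mathlib

open Finset Filter

/-- Extension of `x : Fin (m+1) → ℝ` to `ℕ`, zero outside `[0, m]`. -/
def ext (m : ℕ) (x : Fin (m + 1) → ℝ) (k : ℕ) : ℝ :=
  if h : k < m + 1 then x ⟨k, h⟩ else 0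

/-- Autoconvolution `(x*x)_i = ∑_{j=0}^{i} x_{i-j} x_j`. -/
def aconv (m : ℕ) (x : Fin (m + 1) → ℝ) : Fin (2 * m + 1) → ℝ :=
  fun i => ∑ j ∈ Finset.range (i.1 + 1), ext m x (i.1 - j) * ext m x j

/-- The index `ℓ + j ∈ {0,…,2m}` for `ℓ, j ∈ {0,…,m}`. -/
def idx (m : ℕ) (ℓ j : Fin (m + 1)) : Fin (2 * m + 1) :=
  ⟨ℓ.1 + j.1, by have h1 := ℓ.isLt; have h2 := j.isLt; omega⟩

/-- One term of the I-divergence, with values in `[0,∞]`, with the conventions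
`0·log(0/b) = 0` and value `∞` if `a > 0 = b`. -/
noncomputable def termDiv (a b : ℝ) : ENNReal :=
  if a = 0 then ENNReal.ofReal b
  else if b = 0 then ⊤
  else ENNReal.ofReal (a * Real.log (a / b) - a + b)

/-- `[0,∞]`-valued I-divergence between vectors. -/
noncomputable def Idiv {n : ℕ} (u v : Fin n → ℝ) : ENNReal :=
  ∑ i, termDiv (u i) (v i)

/-- Real-valued I-divergence between vectors (used when the second argument is
positive wherever the first one is). -/
noncomputable def IdivR {n : ℕ} (u v : Fin n → ℝ) : ℝ :=
  ∑ i, (u i * Real.log (u i / v i) - u i + v i)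

/-- `[0,∞]`-valued I-divergence between `(2m+1) × (m+1)` matrices. -/
noncomputable def IdivM (m : ℕ) (M N : Fin (2 * m + 1) → Fin (m + 1) → ℝ) : ENNReal :=
  ∑ i, ∑ j, termDiv (M i j) (N i j)

/-- Real-valued I-divergence between `(2m+1) × (m+1)` matrices. -/
noncomputable def IdivMR (m : ℕ) (M N : Fin (2 * m + 1) → Fin (m + 1) → ℝ) : ℝ :=
  ∑ i, ∑ j, (M i j * Real.log (M i j / N i j) - M i j + N i j)

/-- The set 𝒴: nonnegative matrices supported on `{(i,j) : j ≤ i ≤ j+m}` with row sums `y`. -/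
def calY (m : ℕ) (y : Fin (2 * m + 1) → ℝ) (Y : Fin (2 * m + 1) → Fin (m + 1) → ℝ) : Prop :=
  (∀ i j, 0 ≤ Y i j) ∧
  (∀ (i : Fin (2 * m + 1)) (j : Fin (m + 1)), ¬(j.1 ≤ i.1 ∧ i.1 ≤ j.1 + m) → Y i j = 0) ∧
  (∀ i, ∑ j, Y i j = y i)

/-- The matrix `W(x)` with `W(x)_{ij} = x_{i-j} x_j` on the support and `0` elsewhere. -/
def Wmat (m : ℕ) (x : Fin (m + 1) → ℝ) (i : Fin (2 * m + 1)) (j : Fin (m + 1)) : ℝ :=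
  if h : j.1 ≤ i.1 ∧ i.1 ≤ j.1 + m then x ⟨i.1 - j.1, by omega⟩ * x j else 0

/-- The matrix `Y*(x)` with `Y*(x)_{ij} = (x_{i-j} x_j/(x*x)_i)·y_i` on the support. -/
noncomputable def Ystar (m : ℕ) (y : Fin (2 * m + 1) → ℝ) (x : Fin (m + 1) → ℝ)
    (i : Fin (2 * m + 1)) (j : Fin (m + 1)) : ℝ :=
  if h : j.1 ≤ i.1 ∧ i.1 ≤ j.1 + m then
    x ⟨i.1 - j.1, by omega⟩ * x j / aconv m x i * y i
  else 0

/-- `Ŷ_j = ∑_{i=0}^{m} Y_{i+j,i} + ∑_{i=j}^{j+m} Y_{ij}`. -/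
def Yhat (m : ℕ) (Y : Fin (2 * m + 1) → Fin (m + 1) → ℝ) (j : Fin (m + 1)) : ℝ :=
  (∑ ℓ : Fin (m + 1), Y (idx m ℓ j) ℓ) + ∑ ℓ : Fin (m + 1), Y (idx m ℓ j) j

/-- The algorithm map `T(x)_j = x_j (1/c) ∑_ℓ x_ℓ y_{ℓ+j}/(x*x)_{ℓ+j}`,
with `c = √(∑ y_i)`. -/
noncomputable def Tmap (m : ℕ) (y : Fin (2 * m + 1) → ℝ) (x : Fin (m + 1) → ℝ)
    (j : Fin (m + 1)) : ℝ :=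
  x j * (1 / Real.sqrt (∑ i, y i)) * ∑ ℓ, x ℓ * y (idx m ℓ j) / aconv m x (idx m ℓ j)

/-- The gradient `∇_j I(x) = 2 ∑_ℓ ( x_ℓ − x_ℓ y_{ℓ+j}/(x*x)_{ℓ+j} )`. -/
noncomputable def gradI (m : ℕ) (y : Fin (2 * m + 1) → ℝ) (x : Fin (m + 1) → ℝ)
    (j : Fin (m + 1)) : ℝ :=
  2 * ∑ ℓ, (x ℓ - x ℓ * y (idx m ℓ j) / aconv m x (idx m ℓ j))

lemma inner_ite_eq_Wmat (m : ℕ) (x : Fin (m + 1) → ℝ) (i : Fin (2 * m + 1)) (j : Fin (m + 1)) :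
    ∑ ℓ : Fin (m + 1), (if ℓ.1 + j.1 = i.1 then x ℓ * x j else 0) = Wmat m x i j := by
  unfold Wmat
  by_cases h : j.1 ≤ i.1 ∧ i.1 ≤ j.1 + m
  · rw [dif_pos h]
    set ℓ0 : Fin (m + 1) := ⟨i.1 - j.1, by omega⟩ with hℓ0
    rw [Finset.sum_eq_single ℓ0]
    · rw [if_pos (by simp [hℓ0]; omega)]
    · intro b _ hb
      rw [if_neg]
      intro hc
      exact hb (Fin.ext (by simp [hℓ0]; omega))
    · simp
  · rw [dif_neg h]
    apply Finset.sum_eq_zero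
    intro ℓ _
    rw [if_neg]
    intro hc
    exact h ⟨by omega, by have := ℓ.isLt; omega⟩

lemma Wmat_rowsum (m : ℕ) (x : Fin (m + 1) → ℝ) (i : Fin (2 * m + 1)) :
    ∑ j, Wmat m x i j = aconv m x i := by
  have hW : ∀ j : Fin (m + 1), Wmat m x i j
      = (fun k => if k ≤ i.1 then ext m x (i.1 - k) * ext m x k else 0) j.1 := by
    intro j
    simp only [Wmat, _root_.ext]
    by_cases h : j.1 ≤ i.1 ∧ i.1 ≤ j.1 + m
    · rw [dif_pos h, if_pos h.1, dif_pos (show i.1 - j.1 < m + 1 by omega), dif_pos j.isLt]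
    · rw [dif_neg h]
      by_cases h1 : j.1 ≤ i.1
      · rw [if_pos h1, dif_neg (show ¬ i.1 - j.1 < m + 1 by omega), zero_mul]
      · rw [if_neg h1]
  calc ∑ j, Wmat m x i j
      = ∑ k ∈ Finset.range (m + 1), (if k ≤ i.1 then ext m x (i.1 - k) * ext m x k else 0) := by
        rw [Finset.sum_congr rfl (fun j _ => hW j)]
        exact Fin.sum_univ_eq_sum_range
          (fun k => if k ≤ i.1 then ext m x (i.1 - k) * ext m x k else 0) (m + 1)
    _ = ∑ k ∈ Finset.range (2 * m + 1), (if k ≤ i.1 then ext m x (i.1 - k) * ext m x k else 0) := by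
        apply Finset.sum_subset
        · intro k hk; simp at hk ⊢; omega
        · intro k _ hk
          simp only [Finset.mem_range, not_lt] at hk
          split
          · rw [show _root_.ext m x k = 0 by rw [_root_.ext, dif_neg (by omega)], mul_zero]
          · rfl
    _ = ∑ k ∈ Finset.range (i.1 + 1), (if k ≤ i.1 then ext m x (i.1 - k) * ext m x k else 0) := by
        symm
        apply Finset.sum_subset
        · intro k hk; simp at hk ⊢; have := i.isLt; omega
        · intro k _ hk
          simp only [Finset.mem_range, not_lt] at hk
          rw [if_neg (by omega)]
    _ = aconv m x i := by
        apply Finset.sum_congr rfl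
        intro k hk
        simp only [Finset.mem_range] at hk
        rw [if_pos (by omega)]

lemma aconv_pos (m : ℕ) (x : Fin (m + 1) → ℝ) (hx : ∀ j, 0 < x j) (i : Fin (2 * m + 1)) :
    0 < aconv m x i := by
  rw [← Wmat_rowsum]
  have hnn : ∀ j : Fin (m + 1), 0 ≤ Wmat m x i j := by
    intro j
    unfold Wmat
    split
    · exact le_of_lt (mul_pos (hx _) (hx _))
    · exact le_refl 0
  refine Finset.sum_pos' (fun j _ => hnn j) ?_
  refine ⟨⟨min i.1 m, by omega⟩, Finset.mem_univ _, ?_⟩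
  rw [Wmat, dif_pos (show min i.1 m ≤ i.1 ∧ i.1 ≤ min i.1 m + m by have := i.isLt; omega)]
  exact mul_pos (hx _) (hx _)

/-- the algorithm update of a strictly positive point is strictly
positive and lies in the simplex `{x : ∑ x_j = c}`, `c = √(∑ y_i)`. -/
theorem stmt9 (m : ℕ) (y : Fin (2 * m + 1) → ℝ) (hy : ∀ i, 0 < y i)
    (x : Fin (m + 1) → ℝ) (hx : ∀ j, 0 < x j) :
    (∀ j, 0 < Tmap m y x j) ∧ ∑ j, Tmap m y x j = Real.sqrt (∑ i, y i) := by
  have hy0 : 0 < ∑ i, y i := Finset.sum_pos (fun i _ => hy i) Finset.univ_nonempty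
  set c := Real.sqrt (∑ i, y i) with hcdef
  have hc : 0 < c := Real.sqrt_pos.mpr hy0
  have hac : ∀ i, 0 < aconv m x i := aconv_pos m x hx
  have fiber_sum : ∀ i : Fin (2 * m + 1),
      ∑ p ∈ Finset.univ.filter (fun p : Fin (m + 1) × Fin (m + 1) => idx m p.2 p.1 = i),
        x p.2 * x p.1 = aconv m x i := by
    intro i
    rw [Finset.sum_filter, Fintype.sum_prod_type]
    have : ∀ j ℓ : Fin (m + 1),
        (if idx m ℓ j = i then x ℓ * x j else 0)
          = (if ℓ.1 + j.1 = i.1 then x ℓ * x j else 0) := by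
      intro j ℓ
      congr 1
      simp [idx, Fin.ext_iff]
    calc ∑ j, ∑ ℓ, (if idx m ℓ j = i then x ℓ * x j else 0)
        = ∑ j, ∑ ℓ : Fin (m + 1), (if ℓ.1 + j.1 = i.1 then x ℓ * x j else 0) := by
          exact Finset.sum_congr rfl fun j _ => Finset.sum_congr rfl fun ℓ _ => this j ℓ
      _ = ∑ j, Wmat m x i j := Finset.sum_congr rfl fun j _ => inner_ite_eq_Wmat m x i j
      _ = aconv m x i := Wmat_rowsum m x i
  have key : ∑ p : Fin (m + 1) × Fin (m + 1),
      x p.1 * (x p.2 * y (idx m p.2 p.1) / aconv m x (idx m p.2 p.1)) = ∑ i, y i := by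
    rw [← Finset.sum_fiberwise Finset.univ (fun p : Fin (m + 1) × Fin (m + 1) => idx m p.2 p.1)]
    apply Finset.sum_congr rfl
    intro i _
    calc ∑ p ∈ Finset.univ.filter (fun p : Fin (m + 1) × Fin (m + 1) => idx m p.2 p.1 = i),
          x p.1 * (x p.2 * y (idx m p.2 p.1) / aconv m x (idx m p.2 p.1))
        = ∑ p ∈ Finset.univ.filter (fun p : Fin (m + 1) × Fin (m + 1) => idx m p.2 p.1 = i),
          x p.2 * x p.1 * (y i / aconv m x i) := by
          apply Finset.sum_congr rfl
          intro p hp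
          rw [Finset.mem_filter] at hp
          rw [hp.2]; ring
      _ = (∑ p ∈ Finset.univ.filter (fun p : Fin (m + 1) × Fin (m + 1) => idx m p.2 p.1 = i),
          x p.2 * x p.1) * (y i / aconv m x i) := by rw [← Finset.sum_mul]
      _ = aconv m x i * (y i / aconv m x i) := by rw [fiber_sum i]
      _ = y i := by rw [mul_comm]; exact div_mul_cancel₀ _ (ne_of_gt (hac i))
  constructor
  · intro j
    apply mul_pos (mul_pos (hx j) (by positivity))
    apply Finset.sum_pos _ Finset.univ_nonempty
    intro ℓ _
    exact div_pos (mul_pos (hx ℓ) (hy _)) (hac _)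
  · calc ∑ j, Tmap m y x j
        = (1 / c) * ∑ j, ∑ ℓ, x j * (x ℓ * y (idx m ℓ j) / aconv m x (idx m ℓ j)) := by
          rw [Finset.mul_sum]
          apply Finset.sum_congr rfl
          intro j _
          simp only [Tmap, ← hcdef, Finset.mul_sum]
          apply Finset.sum_congr rfl
          intro ℓ _
          ring
      _ = (1 / c) * ∑ i, y i := by rw [Fintype.sum_prod_type] at key; rw [key]
      _ = c := by
          rw [hcdef]
          field_simp
          rw [Real.sq_sqrt hy0.le]
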